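/- Let p be a prime with p ≠ 2 and p ≠ 5, let α ≥ 1, let k ≥ 1, let β = ord_p(10^k − 1) (the p-adic valuation), and let h be the multiplicative order of 10^k modulo p^{α+β}. Then h > 1, and for every c ≥ 1, p^α divides ρ_{c,k} if and only if h divides c. -/

import Mathlib

/-- `v n` is the sum of the primes and of the exponents greater than 1
in the prime factorization of `n` (exponents equal to 1 are omitted). -/
def v (n : ℕ) : ℕ :=
  ∑ p ∈ n.primeFactors, (p + if n.factorization p = 1 then 0 else n.factorization p)

/-- decimal digit reversal -/
def r (n : ℕ) : ℕ := Nat.ofDigits 10 (Nat.digits 10 n).reverse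

/-- `n` is v-palindromic if `10 ∤ n`, `n ≠ r n` and `v n = v (r n)`. -/
def VPalindromic (n : ℕ) : Prop := ¬ (10 ∣ n) ∧ n ≠ r n ∧ v n = v (r n)

/-- `ρ_{c,k}` -/
def rho (c k : ℕ) : ℕ := ∑ i ∈ Finset.range c, 10 ^ (k * i)

/-- `φ_{p,δ}(α) = v(p^{α+δ}) - v(p^α)` as an integer. -/
def phi (p δ α : ℕ) : ℤ := (v (p ^ (α + δ)) : ℤ) - (v (p ^ α) : ℤ)

theorem stmt4 (p : ℕ) (hp : p.Prime) (hp2 : p ≠ 2) (hp5 : p ≠ 5)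
    (α : ℕ) (hα : 1 ≤ α) (k : ℕ) (hk : 1 ≤ k)
    (β : ℕ) (hβ : β = (10 ^ k - 1).factorization p)
    (h : ℕ) (hh : h = orderOf (10 ^ k : ZMod (p ^ (α + β)))) :
    1 < h ∧ ∀ c : ℕ, 1 ≤ c → (p ^ α ∣ rho c k ↔ h ∣ c) := by
  set m := p ^ (α + β) with hm
  have hm1 : 1 < m := Nat.one_lt_pow (by omega) hp.one_lt
  haveI : NeZero m := ⟨by omega⟩
  have h10k : (10:ℕ) ≤ 10 ^ k := by
    calc (10:ℕ) = 10 ^ 1 := by norm_num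
    _ ≤ 10 ^ k := Nat.pow_le_pow_right (by norm_num) hk
  have h10k1 : (10:ℕ) ^ k - 1 ≠ 0 := by omega
  -- casting lemma
  have cast_iff : ∀ a : ℕ, 1 ≤ a → (((a : ℕ) : ZMod m) = 1 ↔ m ∣ a - 1) := by
    intro a ha
    have h1 : ((a : ℕ) : ZMod m) = ((a - 1 : ℕ) : ZMod m) + 1 := by
      rw [Nat.cast_sub ha]; push_cast; ring
    rw [h1, add_eq_right, ZMod.natCast_eq_zero_iff]
  have hcast10 : ∀ n : ℕ, (((10 ^ n : ℕ) : ZMod m)) = (10 : ZMod m) ^ n := by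
    intro n; push_cast; ring
  -- m does not divide 10^k - 1
  have hndvd : ¬ m ∣ (10 ^ k - 1) := by
    intro hd
    have := (Nat.Prime.pow_dvd_iff_le_factorization hp h10k1).mp hd
    omega
  have h10kne : (10 : ZMod m) ^ k ≠ 1 := by
    intro hx
    exact hndvd ((cast_iff (10 ^ k) (by omega)).mp (by rw [hcast10]; exact hx))
  -- coprimality and finite order
  have hpdvd : ¬ p ∣ 10 := by
    intro hd
    have h1 : p ≤ 10 := Nat.le_of_dvd (by norm_num) hd
    have h2 := hp.two_le
    interval_cases p <;> revert hp hd hp2 hp5 <;> decide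
  have hcop : Nat.Coprime (10 ^ k) m := by
    rw [hm]; exact Nat.Coprime.pow k (α + β) ((hp.coprime_iff_not_dvd.mpr hpdvd).symm)
  have hunit : IsUnit ((10 : ZMod m) ^ k) := by
    rw [← hcast10]
    exact (ZMod.isUnit_iff_coprime _ _).mpr hcop
  obtain ⟨u, hu⟩ := hunit
  have hhpos : 0 < h := by
    rw [hh, ← hu, orderOf_units]
    exact orderOf_pos u
  have hh1 : h ≠ 1 := by
    intro h1
    rw [h1] at hh
    exact h10kne (orderOf_eq_one_iff.mp hh.symm)
  refine ⟨by omega, ?_⟩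
  -- main equivalence
  intro c hc
  have hgeo : rho c k * (10 ^ k - 1) = 10 ^ (k * c) - 1 := by
    have := geom_sum_mul_of_one_le (R := ℕ) (x := 10 ^ k) (by omega) c
    rw [rho]
    calc (∑ i ∈ Finset.range c, 10 ^ (k * i)) * (10 ^ k - 1)
        = (∑ i ∈ Finset.range c, (10 ^ k) ^ i) * (10 ^ k - 1) := by
          congr 1; apply Finset.sum_congr rfl; intro i _; rw [← pow_mul]
      _ = (10 ^ k) ^ c - 1 := this
      _ = 10 ^ (k * c) - 1 := by rw [← pow_mul]
  have hrho0 : rho c k ≠ 0 := by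
    have : 10 ^ (k * 0) ≤ rho c k := by
      apply Finset.single_le_sum (f := fun i => 10 ^ (k * i)) (fun i _ => Nat.zero_le _)
      exact Finset.mem_range.mpr (by omega)
    simp at this; omega
  have h10kc : (10:ℕ) ≤ 10 ^ (k * c) := by
    calc (10:ℕ) = 10 ^ 1 := by norm_num
    _ ≤ 10 ^ (k * c) := Nat.pow_le_pow_right (by norm_num) (by nlinarith)
  have h10kc1 : (10:ℕ) ^ (k * c) - 1 ≠ 0 := by omega
  have hfact : (10 ^ (k * c) - 1).factorization p = (rho c k).factorization p + β := by
    rw [← hgeo, Nat.factorization_mul hrho0 h10k1]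
    simp [hβ]
  constructor
  · intro hd
    have h1 : α ≤ (rho c k).factorization p :=
      (Nat.Prime.pow_dvd_iff_le_factorization hp hrho0).mp hd
    have h2 : m ∣ 10 ^ (k * c) - 1 := by
      rw [hm]
      exact (Nat.Prime.pow_dvd_iff_le_factorization hp h10kc1).mpr (by omega)
    have h3 : (10 : ZMod m) ^ (k * c) = 1 := by
      rw [← hcast10]
      exact (cast_iff _ (by omega)).mpr h2
    rw [hh]
    apply orderOf_dvd_of_pow_eq_one
    rw [← pow_mul]
    exact h3
  · intro hd
    have h3 : ((10 : ZMod m) ^ k) ^ c = 1 := by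
      rw [hh] at hd
      exact orderOf_dvd_iff_pow_eq_one.mp hd
    have h2 : m ∣ 10 ^ (k * c) - 1 := by
      rw [← pow_mul] at h3
      exact (cast_iff _ (by omega)).mp (by rw [hcast10]; exact h3)
    have h1 : α + β ≤ (10 ^ (k * c) - 1).factorization p :=
      (Nat.Prime.pow_dvd_iff_le_factorization hp h10kc1).mp h2
    exact (Nat.Prime.pow_dvd_iff_le_factorization hp hrho0).mpr (by omega)
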